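/- A flow f in a network is maximum if and only if the residual network of f contains no augmenting path from source to sink. -/

import Mathlib

open Finset

/-- `f` is a valid flow in the network with capacities `c`, source `s`, sink `t`. -/
def IsFlow {V : Type*} [Fintype V] (c : V → V → ℝ) (s t : V) (f : V → V → ℝ) : Prop :=
  (∀ u v, 0 ≤ f u v ∧ f u v ≤ c u v) ∧
  (∀ v, v ≠ s → v ≠ t → (∑ u, f u v) = ∑ u, f v u)

/-- Residual capacity of the flow `f` w.r.t. capacities `c`. -/
def resCap {V : Type*} (c f : V → V → ℝ) (u v : V) : ℝ :=
  c u v - f u v + f v u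

/-- The value of a flow: net flow out of the source. -/
def flowValue {V : Type*} [Fintype V] (f : V → V → ℝ) (s : V) : ℝ :=
  (∑ v, f s v) - ∑ v, f v s


lemma exists_nodup_chain' {V : Type*} (r : V → V → Prop) :
    ∀ n (L : List V), L.length ≤ n → List.Chain' r L →
    ∃ L', List.Chain' r L' ∧ L'.Nodup ∧ L'.head? = L.head? ∧ L'.getLast? = L.getLast? := by
  intro n
  induction n with
  | zero =>
    intro L hlen hL
    exact ⟨L, hL, by simpa using List.length_eq_zero_iff.mp (Nat.le_zero.mp hlen) ▸ List.nodup_nil,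
      rfl, rfl⟩
  | succ n ih =>
    intro L hlen hL
    by_cases hnd : L.Nodup
    · exact ⟨L, hL, hnd, rfl, rfl⟩
    · obtain ⟨x, hx⟩ := List.exists_duplicate_iff_not_nodup.mpr hnd
      have hsub : [x, x].Sublist L := List.duplicate_iff_sublist.mp hx
      obtain ⟨r₁, r₂, hL12, hx1, hx2⟩ := List.cons_sublist_iff.mp hsub
      have hx2' : x ∈ r₂ := List.singleton_sublist.mp hx2
      obtain ⟨p, m₁, hp⟩ := List.append_of_mem hx1
      obtain ⟨m₂, q, hq⟩ := List.append_of_mem hx2'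
      have hLeq : L = p ++ x :: ((m₁ ++ m₂) ++ x :: q) := by
        subst hp hq hL12; simp
      -- splice
      have hL' := hL
      rw [hLeq] at hL'
      obtain ⟨h1, h2⟩ := List.isChain_split.mp hL'
      have h2' : List.Chain' r ((x :: (m₁ ++ m₂)) ++ x :: q) := by simpa [List.Chain'] using h2
      obtain ⟨_, h3⟩ := List.isChain_split.mp h2'
      have hchain : List.Chain' r (p ++ x :: q) := List.isChain_split.mpr ⟨h1, h3⟩
      have hlen' : (p ++ x :: q).length ≤ n := by
        have := hlen
        rw [hLeq] at this
        simp at this ⊢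
        omega
      obtain ⟨L', hc', hnd', hh', hl'⟩ := ih (p ++ x :: q) hlen' hchain
      refine ⟨L', hc', hnd', ?_, ?_⟩
      · rw [hh', hLeq]
        cases p <;> simp
      · rw [hl', hLeq]
        rw [List.getLast?_append, List.getLast?_append]
        have : (x :: ((m₁ ++ m₂) ++ x :: q)).getLast? = (x :: q).getLast? := by
          rw [show (x :: ((m₁ ++ m₂) ++ x :: q)) = (x :: (m₁ ++ m₂)) ++ (x :: q) by simp,
            List.getLast?_append]
          cases q with
          | nil => simp
          | cons a q' =>
            obtain ⟨y, hy⟩ : ∃ y, (a :: q').getLast? = some y :=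
              ⟨_, List.getLast?_eq_getLast (by simp)⟩
            simp [hy]
        rw [this]

open Classical Finset in
lemma exists_better_flow {V : Type*} [Fintype V] (c : V → V → ℝ) (s t : V)
    (f : V → V → ℝ) (hf : IsFlow c s t f)
    (L : List V) (hL : List.Chain' (fun u v => 0 < resCap c f u v) L)
    (hnd : L.Nodup) (hlen : 2 ≤ L.length)
    (hs : L.get ⟨0, by omega⟩ = s) (ht : L.get ⟨L.length - 1, by omega⟩ = t) :
    ∃ g, IsFlow c s t g ∧ flowValue f s < flowValue g s := by
  set edge : V → V → Prop :=
    fun a b => ∃ i, ∃ h : i + 1 < L.length, L.get ⟨i, by omega⟩ = a ∧ L.get ⟨i + 1, h⟩ = b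
    with hedge
  have hinj : ∀ (i j : ℕ) (hi : i < L.length) (hj : j < L.length),
      L.get ⟨i, hi⟩ = L.get ⟨j, hj⟩ → i = j := by
    intro i j hi hj h
    have := (hnd.get_inj_iff).mp h
    simpa using Fin.mk.injEq _ _ _ _ ▸ this
  have hr : ∀ {a b}, edge a b → 0 < resCap c f a b := by
    rintro a b ⟨i, h, rfl, rfl⟩
    exact List.isChain_iff_getElem.mp hL i (by omega)
  -- uniqueness of in- and out-edges
  have huin : ∀ {u u' v}, edge u v → edge u' v → u = u' := by
    rintro u u' v ⟨i, hi, rfl, hv⟩ ⟨j, hj, rfl, hv'⟩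
    have h1 : i + 1 = j + 1 := hinj _ _ _ _ (hv.trans hv'.symm)
    have hij : i = j := by omega
    subst hij; rfl
  have huout : ∀ {v w w'}, edge v w → edge v w' → w = w' := by
    rintro v w w' ⟨i, hi, hv, rfl⟩ ⟨j, hj, hv', rfl⟩
    have h1 : i = j := hinj _ _ _ _ (hv.trans hv'.symm)
    subst h1; rfl
  have hnotboth : ∀ {a b}, edge a b → edge b a → False := by
    rintro a b ⟨i, hi, rfl, hb⟩ ⟨j, hj, hb', ha⟩
    have h1 : i + 1 = j := hinj _ _ _ _ (hb.trans hb'.symm)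
    have h2 : i = j + 1 := hinj _ _ _ _ ha.symm
    omega
  have hnoins : ∀ u, ¬ edge u s := by
    rintro u ⟨i, hi, rfl, hsv⟩
    have : i + 1 = 0 := hinj _ _ _ _ (hsv.trans hs.symm)
    omega
  have hnooutt : ∀ w, ¬ edge t w := by
    rintro w ⟨i, hi, hti, rfl⟩
    have : i = L.length - 1 := hinj _ _ _ (by omega) (hti.trans ht.symm)
    omega
  have houts : edge s (L.get ⟨1, by omega⟩) := ⟨0, by omega, hs, rfl⟩
  have hinout : ∀ {v}, v ≠ s → v ≠ t → (∃ u, edge u v) → (∃ w, edge v w) := by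
    rintro v hvs hvt ⟨u, i, hi, hu, hv⟩
    have hne : i + 1 ≠ L.length - 1 := by
      intro h
      apply hvt
      rw [← hv, ← ht]
      congr 1
      exact Fin.mk_eq_mk.mpr h
    exact ⟨L.get ⟨i + 2, by omega⟩, i + 1, by omega, hv, rfl⟩
  have houtin : ∀ {v}, v ≠ s → v ≠ t → (∃ w, edge v w) → (∃ u, edge u v) := by
    rintro v hvs hvt ⟨w, i, hi, hv, hw⟩
    have hne : i ≠ 0 := by
      intro h
      apply hvs
      rw [← hv, ← hs]
      congr 1
      exact Fin.mk_eq_mk.mpr h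
    exact ⟨L.get ⟨i - 1, by omega⟩, i - 1, by omega,
      rfl, by rw [← hv]; congr 1; exact Fin.mk_eq_mk.mpr (by omega)⟩
  -- the edge set as a Finset, and ε
  set Ef : Finset (V × V) := Finset.univ.filter (fun p => edge p.1 p.2) with hEf
  have hEfne : Ef.Nonempty := ⟨(s, L.get ⟨1, by omega⟩),
    Finset.mem_filter.mpr ⟨Finset.mem_univ _, houts⟩⟩
  set ε : ℝ := Ef.inf' hEfne (fun p => resCap c f p.1 p.2) with hε
  have hεpos : 0 < ε := by
    rw [hε, Finset.lt_inf'_iff]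
    rintro ⟨a, b⟩ hab
    exact hr (Finset.mem_filter.mp hab).2
  have hεle : ∀ {a b}, edge a b → ε ≤ resCap c f a b := by
    intro a b hab
    rw [hε]
    exact Finset.inf'_le (fun p : V × V => resCap c f p.1 p.2)
      (Finset.mem_filter.mpr ⟨Finset.mem_univ (a, b), hab⟩)
  -- the augmented flow
  set d : V → V → ℝ := fun a b => min ε (c a b - f a b) with hd
  set A : V → V → ℝ := fun a b =>
    (if edge a b then d a b else 0) - (if edge b a then ε - d b a else 0) with hA
  set g : V → V → ℝ := fun a b => f a b + A a b with hg
  have hd0 : ∀ {a b}, edge a b → 0 ≤ d a b := by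
    intro a b _
    have h1 : d a b = min ε (c a b - f a b) := rfl
    rw [h1]
    exact le_min hεpos.le (sub_nonneg.mpr (hf.1 a b).2)
  have hdε : ∀ a b, d a b ≤ ε := fun a b => min_le_left _ _
  -- sums of A
  have hsumA : ∀ v, (∑ u, A u v) =
      (∑ u, if edge u v then d u v else 0) - (∑ u, if edge v u then ε - d v u else 0) := by
    intro v; rw [← Finset.sum_sub_distrib]
  have hsumA' : ∀ v, (∑ u, A v u) =
      (∑ u, if edge v u then d v u else 0) - (∑ u, if edge u v then ε - d u v else 0) := by
    intro v; rw [← Finset.sum_sub_distrib]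
  have hin_sum : ∀ (v u₀ : V) (F : V → V → ℝ), edge u₀ v →
      (∑ u, if edge u v then F u v else 0) = F u₀ v := by
    intro v u₀ F h
    rw [Finset.sum_eq_single u₀ (fun b _ hb => if_neg (fun h' => hb (huin h' h)))
      (fun hb => absurd (Finset.mem_univ u₀) hb)]
    exact if_pos h
  have hout_sum : ∀ (v w₀ : V) (F : V → V → ℝ), edge v w₀ →
      (∑ u, if edge v u then F v u else 0) = F v w₀ := by
    intro v w₀ F h
    rw [Finset.sum_eq_single w₀ (fun b _ hb => if_neg (fun h' => hb (huout h' h)))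
      (fun hb => absurd (Finset.mem_univ w₀) hb)]
    exact if_pos h
  have hin_zero : ∀ (v : V) (F : V → V → ℝ), (∀ u, ¬ edge u v) →
      (∑ u, if edge u v then F u v else 0) = 0 :=
    fun v F h => Finset.sum_eq_zero (fun u _ => if_neg (h u))
  have hout_zero : ∀ (v : V) (F : V → V → ℝ), (∀ u, ¬ edge v u) →
      (∑ u, if edge v u then F v u else 0) = 0 :=
    fun v F h => Finset.sum_eq_zero (fun u _ => if_neg (h u))
  refine ⟨g, ⟨?_, ?_⟩, ?_⟩
  · -- capacity bounds
    intro a b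
    by_cases h1 : edge a b
    · have h2 : ¬ edge b a := fun h2 => hnotboth h1 h2
      have hgab : g a b = f a b + d a b := by simp [hg, hA, h1, h2]
      constructor
      · rw [hgab]; have := (hf.1 a b).1; have := hd0 h1; linarith
      · rw [hgab]; have := min_le_right ε (c a b - f a b); simp [hd]; linarith [hd0 h1]
    · by_cases h2 : edge b a
      · have hgab : g a b = f a b - (ε - d b a) := by simp [hg, hA, h1, h2]; ring
        have hres := hεle h2
        rw [resCap] at hres
        constructor
        · rw [hgab]
          have hdba : ε - d b a = ε - min ε (c b a - f b a) := rfl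
          rw [hdba]
          rcases le_total ε (c b a - f b a) with h | h
          · rw [min_eq_left h]; linarith [(hf.1 a b).1]
          · rw [min_eq_right h]; linarith
        · rw [hgab]; have := hdε b a; linarith [(hf.1 a b).2]
      · have hgab : g a b = f a b := by simp [hg, hA, h1, h2]
        rw [hgab]; exact hf.1 a b
  · -- conservation
    intro v hvs hvt
    have hfc := hf.2 v hvs hvt
    have hgs : (∑ u, g u v) = (∑ u, f u v) + ∑ u, A u v := by
      simp only [hg]; rw [Finset.sum_add_distrib]
    have hgs' : (∑ u, g v u) = (∑ u, f v u) + ∑ u, A v u := by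
      simp only [hg]; rw [Finset.sum_add_distrib]
    rw [hgs, hgs', hfc]
    congr 1
    rw [hsumA, hsumA']
    by_cases hin : ∃ u, edge u v
    · obtain ⟨u₀, hu₀⟩ := hin
      obtain ⟨w₀, hw₀⟩ := hinout hvs hvt ⟨u₀, hu₀⟩
      rw [hin_sum v u₀ d hu₀, hout_sum v w₀ (fun a b => ε - d a b) hw₀,
        hout_sum v w₀ d hw₀, hin_sum v u₀ (fun a b => ε - d a b) hu₀]
      ring
    · have hout : ∀ w, ¬ edge v w := by
        intro w hw
        exact hin (houtin hvs hvt ⟨w, hw⟩)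
      push_neg at hin
      rw [hin_zero v d hin, hout_zero v (fun a b => ε - d a b) hout,
        hout_zero v d hout, hin_zero v (fun a b => ε - d a b) hin]
  · -- strictly larger value
    have hval : flowValue g s = flowValue f s + ((∑ u, A s u) - ∑ u, A u s) := by
      rw [flowValue, flowValue]
      simp only [hg]
      rw [Finset.sum_add_distrib, Finset.sum_add_distrib]
      ring
    set w₀ := L.get ⟨1, by omega⟩ with hw₀
    rw [hval, hsumA, hsumA',
      hout_sum s w₀ d houts, hout_sum s w₀ (fun a b => ε - d a b) houts,
      hin_zero s d hnoins, hin_zero s (fun a b => ε - d a b) hnoins]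
    have := hεpos
    linarith

/-- A flow is maximum iff the resCap network contains no augmenting path
from the source to the sink (i.e. no path of positive resCap capacity). -/
theorem maxflow_iff_no_augmenting_path
    {V : Type*} [Fintype V] (c : V → V → ℝ) (s t : V) (hst : s ≠ t)
    (hc : ∀ u v, 0 ≤ c u v) (f : V → V → ℝ) (hf : IsFlow c s t f) :
    (∀ g, IsFlow c s t g → flowValue g s ≤ flowValue f s) ↔
      ¬ Relation.ReflTransGen (fun u v => 0 < resCap c f u v) s t := by
  classical
  constructor
  · -- max → no augmenting path
    intro hmax hpath
    obtain ⟨l, hchain, hlast⟩ := List.exists_isChain_cons_of_relationReflTransGen hpath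
    have hchain' : List.Chain' (fun u v => 0 < resCap c f u v) (s :: l) := hchain
    obtain ⟨L, hL, hnd, hh, hl⟩ :=
      exists_nodup_chain' (fun u v => 0 < resCap c f u v) (s :: l).length (s :: l) le_rfl hchain'
    have hh' : L.head? = some s := by rw [hh]; rfl
    have hl' : L.getLast? = some t := by
      rw [hl, List.getLast?_eq_getLast (l := s :: l) (by simp)]
      exact congrArg some hlast
    have hLne : L ≠ [] := by
      intro h; rw [h] at hh'; simp at hh'
    have hlen : 2 ≤ L.length := by
      rcases L with _ | ⟨a, _ | ⟨b, L'⟩⟩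
      · simp at hh'
      · simp at hh' hl'
        exact absurd (hh'.symm.trans hl') hst
      · simp
    have hs0 : L.get ⟨0, by omega⟩ = s := by
      rcases L with _ | ⟨a, L'⟩
      · simp at hh'
      · simpa using hh'
    have ht0 : L.get ⟨L.length - 1, by omega⟩ = t := by
      have := List.getLast?_eq_getLast hLne
      rw [this] at hl'
      have h2 := Option.some.inj hl'
      rw [← h2]
      exact (List.getLast_eq_getElem hLne).symm
    obtain ⟨g, hg, hlt⟩ := exists_better_flow c s t f hf L hL hnd hlen hs0 ht0
    exact absurd (hmax g hg) (not_le.mpr hlt)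
  · -- no augmenting path → max
    intro hno
    set r : V → V → Prop := fun u v => 0 < resCap c f u v with hrdef
    set S : Finset V := Finset.univ.filter (fun v => Relation.ReflTransGen r s v) with hS
    have hsS : s ∈ S := by
      rw [hS, Finset.mem_filter]
      exact ⟨Finset.mem_univ _, Relation.ReflTransGen.refl⟩
    have htS : t ∉ S := by
      rw [hS, Finset.mem_filter]
      rintro ⟨-, h⟩
      exact hno h
    have hcross : ∀ u ∈ S, ∀ v ∉ S, f u v = c u v ∧ f v u = 0 := by
      intro u hu v hv
      have hnr : ¬ r u v := by
        intro h
        apply hv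
        rw [hS, Finset.mem_filter]
        exact ⟨Finset.mem_univ _, ((Finset.mem_filter.mp (hS ▸ hu)).2).tail h⟩
      rw [hrdef] at hnr
      push_neg at hnr
      rw [resCap] at hnr
      have h1 := (hf.1 u v).2
      have h2 := (hf.1 v u).1
      constructor <;> linarith
    have cut : ∀ g, IsFlow c s t g →
        flowValue g s = ∑ u ∈ S, ∑ v ∈ Sᶜ, (g u v - g v u) := by
      intro g hg
      have h1 : flowValue g s = ∑ u ∈ S, ((∑ v, g u v) - ∑ v, g v u) := by
        rw [Finset.sum_eq_single s]
        · rfl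
        · intro u hu hus
          have hut : u ≠ t := fun h => htS (h ▸ hu)
          exact sub_eq_zero_of_eq (hg.2 u hus hut).symm
        · intro h
          exact absurd hsS h
      have hsplit : ∀ u, (∑ v, g u v) - (∑ v, g v u) =
          ((∑ v ∈ S, g u v) - ∑ v ∈ S, g v u) +
            ((∑ v ∈ Sᶜ, g u v) - ∑ v ∈ Sᶜ, g v u) := by
        intro u
        rw [← Finset.sum_add_sum_compl S (fun v => g u v),
          ← Finset.sum_add_sum_compl S (fun v => g v u)]
        ring
      calc flowValue g s = ∑ u ∈ S, ((∑ v, g u v) - ∑ v, g v u) := h1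
        _ = ∑ u ∈ S, (((∑ v ∈ S, g u v) - ∑ v ∈ S, g v u) +
              ((∑ v ∈ Sᶜ, g u v) - ∑ v ∈ Sᶜ, g v u)) :=
            Finset.sum_congr rfl (fun u _ => hsplit u)
        _ = ((∑ u ∈ S, ∑ v ∈ S, g u v) - ∑ u ∈ S, ∑ v ∈ S, g v u) +
              ∑ u ∈ S, ((∑ v ∈ Sᶜ, g u v) - ∑ v ∈ Sᶜ, g v u) := by
            rw [Finset.sum_add_distrib, Finset.sum_sub_distrib]
        _ = ∑ u ∈ S, ((∑ v ∈ Sᶜ, g u v) - ∑ v ∈ Sᶜ, g v u) := by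
            rw [Finset.sum_comm (s := S) (t := S) (f := fun u v => g v u)]
            ring
        _ = ∑ u ∈ S, ∑ v ∈ Sᶜ, (g u v - g v u) := by
            simp [Finset.sum_sub_distrib]
    intro g hg
    rw [cut g hg, cut f hf]
    refine Finset.sum_le_sum (fun u hu => Finset.sum_le_sum (fun v hv => ?_))
    have hv' : v ∉ S := by simpa using hv
    obtain ⟨h1, h2⟩ := hcross u hu v hv'
    have h3 := (hg.1 u v).2
    have h4 := (hg.1 v u).1
    rw [h1, h2]
    linarith
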